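/- Let Ω = {(x', x_n) : x_n > ρ(x')} with ρ : ℝ^{n−1} → ℝ Lipschitz with constant M = ‖∇ρ‖_∞, and define the fold map L : ℝⁿ → cl(Ω) by L(x) = x if x ∈ Ω and L(x) = (x', 2ρ(x') − x_n) otherwise. Then for every x ∈ ℝⁿ and y ∈ Ω, |L(x) − y| ≤ (M + √(1+M²))² · |x − y|. -/

import Mathlib

/-- The first `m` coordinates of a point of `ℝ^{m+1}`. -/
noncomputable def initCoord (m : ℕ) (x : EuclideanSpace ℝ (Fin (m + 1))) :
    EuclideanSpace ℝ (Fin m) :=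
  WithLp.toLp 2 (fun i => x i.castSucc)

/-- The last coordinate of a point of `ℝ^{m+1}`. -/
noncomputable def lastCoord (m : ℕ) (x : EuclideanSpace ℝ (Fin (m + 1))) : ℝ :=
  x (Fin.last m)

/-- The fold map of the special Lipschitz domain `Ω = {xₙ > ρ(x')}`: the identity on `Ω`,
and the reflection `(x', xₙ) ↦ (x', 2ρ(x') − xₙ)` off `Ω`. -/
noncomputable def foldMap (m : ℕ) (ρ : EuclideanSpace ℝ (Fin m) → ℝ)
    (x : EuclideanSpace ℝ (Fin (m + 1))) : EuclideanSpace ℝ (Fin (m + 1)) :=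
  if ρ (initCoord m x) < lastCoord m x then x
  else WithLp.toLp 2 (Fin.snoc (initCoord m x).ofLp (2 * ρ (initCoord m x) - lastCoord m x))

lemma norm_sq_split (m : ℕ) (z : EuclideanSpace ℝ (Fin (m + 1))) :
    ‖z‖ ^ 2 = ‖initCoord m z‖ ^ 2 + (lastCoord m z) ^ 2 := by
  rw [EuclideanSpace.norm_eq, EuclideanSpace.norm_eq,
    Real.sq_sqrt (by positivity), Real.sq_sqrt (by positivity),
    Fin.sum_univ_castSucc]
  simp [initCoord, lastCoord, sq_abs]

lemma key_ineq (M r a s t : ℝ) (hM : 0 ≤ M) (hr1 : 1 ≤ r) (hr2 : r ^ 2 = 1 + M ^ 2)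
    (ha : 0 ≤ a) (hst : s ≤ t) (hts : t ≤ 2 * M * a - s) :
    a ^ 2 + t ^ 2 ≤ ((M + r) ^ 2) ^ 2 * (a ^ 2 + s ^ 2) := by
  have hrM : M ≤ r := by nlinarith
  have hC1 : 1 ≤ (M + r) ^ 2 := by nlinarith
  have hC2 : 1 ≤ ((M + r) ^ 2) ^ 2 := by nlinarith
  have hpos : (0:ℝ) ≤ a ^ 2 + s ^ 2 := by positivity
  have hone : (r - M) * (r + M) = 1 := by linear_combination hr2
  have expand : (r + M) * ((r - M) * a + s) ^ 2
      = (r - M) * a ^ 2 + 2 * (a * s) + (r + M) * s ^ 2 := by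
    linear_combination ((r - M) * a ^ 2 + 2 * a * s) * hone
  have hAM : 0 ≤ (r - M) * a ^ 2 + 2 * (a * s) + (r + M) * s ^ 2 := by
    rw [← expand]
    exact mul_nonneg (by linarith) (sq_nonneg _)
  have hMr2 : (M + r) ^ 2 = 1 + 2 * M ^ 2 + 2 * M * r := by linear_combination hr2
  have hK : a ^ 2 + (2 * M * a - s) ^ 2 ≤ (M + r) ^ 2 * (a ^ 2 + s ^ 2) := by
    rw [hMr2]
    nlinarith [mul_nonneg hM hAM]
  have hCC : (M + r) ^ 2 * (a ^ 2 + s ^ 2) ≤ ((M + r) ^ 2) ^ 2 * (a ^ 2 + s ^ 2) := by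
    nlinarith [mul_nonneg (mul_nonneg (by positivity : (0:ℝ) ≤ (M + r) ^ 2) hpos)
      (sub_nonneg.2 hC1)]
  rcases le_total t 0 with h0 | h0
  · have ht2 : t ^ 2 ≤ s ^ 2 := by nlinarith
    nlinarith [mul_nonneg (sub_nonneg.2 hC2) hpos]
  · have ht2 : t ^ 2 ≤ (2 * M * a - s) ^ 2 := by nlinarith
    linarith

/-- **Lipschitz estimate for the fold map.** For every `x ∈ ℝⁿ` and `y ∈ Ω`,
`|L(x) − y| ≤ (M + √(1+M²))² |x − y|`, where `M` is the Lipschitz constant of `ρ`. -/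
theorem stmt2 (m : ℕ) (ρ : EuclideanSpace ℝ (Fin m) → ℝ) (M : ℝ) (hM : 0 ≤ M)
    (hρ : LipschitzWith M.toNNReal ρ)
    (x y : EuclideanSpace ℝ (Fin (m + 1)))
    (hy : ρ (initCoord m y) < lastCoord m y) :
    ‖foldMap m ρ x - y‖ ≤ (M + Real.sqrt (1 + M ^ 2)) ^ 2 * ‖x - y‖ := by
  have hr2 : Real.sqrt (1 + M ^ 2) ^ 2 = 1 + M ^ 2 := Real.sq_sqrt (by positivity)
  set r := Real.sqrt (1 + M ^ 2) with hrdef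
  have hr0 : 0 ≤ r := Real.sqrt_nonneg _
  have hr1 : 1 ≤ r := by nlinarith
  have hrM : M ≤ r := by nlinarith
  have hC1 : 1 ≤ (M + r) ^ 2 := by nlinarith
  unfold foldMap
  split_ifs with h
  · exact le_mul_of_one_le_left (norm_nonneg _) hC1
  · push_neg at h
    set x' := initCoord m x with hx'
    set y' := initCoord m y with hy'
    set a := ‖x' - y'‖ with hadef
    have ha : 0 ≤ a := norm_nonneg _
    have hv : |ρ x' - ρ y'| ≤ M * a := by
      have := hρ.dist_le_mul x' y'
      rwa [Real.dist_eq, Real.coe_toNNReal M hM, dist_eq_norm] at this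
    set s := lastCoord m x - lastCoord m y with hsdef
    set t := 2 * ρ x' - lastCoord m x - lastCoord m y with htdef
    set z : EuclideanSpace ℝ (Fin (m + 1)) := WithLp.toLp 2 (Fin.snoc x'.ofLp (2 * ρ x' - lastCoord m x)) with hz
    -- geometry: decompose norms
    have e1 : initCoord m (z - y) = x' - y' := by
      ext i
      simp [initCoord, hz, hx', hy', Fin.snoc_castSucc]
    have e2 : lastCoord m (z - y) = t := by
      simp [lastCoord, hz, htdef]
    have e3 : initCoord m (x - y) = x' - y' := by
      ext i
      simp [initCoord, hx', hy']
    have e4 : lastCoord m (x - y) = s := by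
      simp [lastCoord, hsdef]
    have n1 : ‖z - y‖ ^ 2 = a ^ 2 + t ^ 2 := by
      rw [norm_sq_split, e1, e2]
    have n2 : ‖x - y‖ ^ 2 = a ^ 2 + s ^ 2 := by
      rw [norm_sq_split, e3, e4]
    -- key bounds: s ≤ t ≤ 2*M*a - s
    have hst : s ≤ t := by
      have : lastCoord m x ≤ ρ x' := h
      simp only [hsdef, htdef]; linarith
    have hts : t ≤ 2 * M * a - s := by
      have h1 : ρ x' - ρ y' ≤ M * a := (abs_le.mp hv).2
      have h2 : ρ y' < lastCoord m y := hy
      simp only [htdef, hsdef]; linarith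
    have key : a ^ 2 + t ^ 2 ≤ ((M + r) ^ 2) ^ 2 * (a ^ 2 + s ^ 2) :=
      key_ineq M r a s t hM hr1 hr2 ha hst hts
    have hfin : ‖z - y‖ ^ 2 ≤
        ((M + r) ^ 2 * ‖x - y‖) ^ 2 := by
      rw [n1, mul_pow, n2]; linarith [key]
    exact (pow_le_pow_iff_left₀ (norm_nonneg _) (by positivity) two_ne_zero).mp hfin
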